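/- arXiv:2602.04275 — 2 statements merged into one kernel-verified Lean document; each statement's English description precedes it below -/
import Mathlib

section
/- Let (X, ν) be a probability space, T measure-preserving with ν ergodic for T, and suppose p, q ≥ 1 with C : X → ℤ/pℤ measurable satisfying C(T x) = C(x) + (q mod p) a.e. If ν is ergodic for T^{pq} (e.g. if (X, T^q, ν) is Bernoulli), then p divides q. -/
open MeasureTheory

/-- If T preserves the ergodic probability measure ν, C : X → ℤ/pℤ satisfies
C(Tx) = C(x) + (q mod p) a.e., and ν is ergodic for T^{pq}, then p divides q. -/
theorem stmt8 {X : Type*} [MeasurableSpace X] (ν : Measure X)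
    [IsProbabilityMeasure ν]
    (T : X → X) (hTbij : Function.Bijective T)
    (p q : ℕ) (hp : 0 < p) (hq : 0 < q)
    [MeasurableSpace (ZMod p)] [MeasurableSingletonClass (ZMod p)]
    (C : X → ZMod p) (hC : Measurable C)
    (hcoc : ∀ᵐ x ∂ν, C (T x) = C x + (q : ZMod p))
    (hergT : Ergodic T ν) (hergpq : Ergodic (T^[p * q]) ν) :
    p ∣ q := by
  have : NeZero p := ⟨hp.ne'⟩
  have hmp : MeasurePreserving T ν ν := hergT.toMeasurePreserving
  -- iterate the cocycle
  have hiter : ∀ n : ℕ, ∀ᵐ x ∂ν, C (T^[n] x) = C x + (n : ZMod p) * (q : ZMod p) := by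
    intro n
    induction n with
    | zero => filter_upwards with x; simp
    | succ n ih =>
      have hpull : ∀ᵐ x ∂ν, C (T (T^[n] x)) = C (T^[n] x) + (q : ZMod p) :=
        (hmp.iterate n).quasiMeasurePreserving.ae hcoc
      filter_upwards [ih, hpull] with x h1 h2
      rw [Function.iterate_succ_apply', h2, h1]
      push_cast
      ring
  have hinv : C ∘ (T^[p * q]) =ᵐ[ν] C := by
    filter_upwards [hiter (p * q)] with x h1
    simp only [Function.comp_apply, h1]
    have : ((p * q : ℕ) : ZMod p) = 0 := by
      simp [ZMod.natCast_self]
    rw [this, zero_mul, add_zero]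
  obtain ⟨c, hc⟩ := hergpq.ae_eq_const_of_ae_eq_comp₀ hC.nullMeasurable hinv
  have hcT : ∀ᵐ x ∂ν, C (T x) = c := hmp.quasiMeasurePreserving.ae hc
  have hq0 : (q : ZMod p) = 0 := by
    have : ∀ᵐ x ∂ν, (q : ZMod p) = 0 := by
      filter_upwards [hcoc, hc, hcT] with x h1 h2 h3
      rw [h3, h2] at h1
      exact (left_eq_add.mp h1)
    obtain ⟨x, hx⟩ := this.exists
    exact hx
  exact (ZMod.natCast_eq_zero_iff q p).mp hq0
end

section
/- Let f : M → M be measure-preserving for an ergodic probability measure ν, let p ≥ 1, and write ν = (1/p) Σ_{j=0}^{p−1} f^j_* ρ where ρ is an ergodic component of ν with respect to f^p. Then each f^j_* ρ is f^p-invariant, f_* (f^{p−1}_* ρ) = ρ holds up to the decomposition (i.e. f permutes the measures f^j_* ρ cyclically), and each f^j_* ρ is f^p-ergodic. -/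
open MeasureTheory

/-- Cyclic structure of the ergodic components of an f-ergodic measure ν with
respect to f^p: if ν = (1/p) Σ_{j<p} f^j_* ρ with ρ an f^p-ergodic component,
then each f^j_* ρ is f^p-invariant, f permutes them cyclically
(f_*(f^{p−1}_* ρ) = ρ), and each f^j_* ρ is f^p-ergodic. -/
theorem stmt18 {Ω : Type*} [MeasurableSpace Ω] (f : Ω → Ω) (hf : Measurable f)
    (hbij : Function.Bijective f)
    (ν ρ : Measure Ω) [IsProbabilityMeasure ν] [IsProbabilityMeasure ρ]
    (hν : Ergodic f ν) (p : ℕ) (hp : 0 < p)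
    (hρ : Ergodic (f^[p]) ρ)
    (hdec : ν = (p : ENNReal)⁻¹ •
      ∑ j ∈ Finset.range p, Measure.map (f^[j]) ρ) :
    (∀ j < p, Measure.map (f^[p]) (Measure.map (f^[j]) ρ)
      = Measure.map (f^[j]) ρ)
    ∧ Measure.map f (Measure.map (f^[p - 1]) ρ) = ρ
    ∧ ∀ j < p, Ergodic (f^[p]) (Measure.map (f^[j]) ρ) := by
  have hfp : Measurable (f^[p]) := hf.iterate p
  have hmapρ : Measure.map (f^[p]) ρ = ρ := hρ.toMeasurePreserving.map_eq
  have hinv : ∀ j : ℕ, Measure.map (f^[p]) (Measure.map (f^[j]) ρ)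
      = Measure.map (f^[j]) ρ := by
    intro j
    have hfj : Measurable (f^[j]) := hf.iterate j
    calc Measure.map (f^[p]) (Measure.map (f^[j]) ρ)
        = Measure.map (f^[p] ∘ f^[j]) ρ := Measure.map_map hfp hfj
      _ = Measure.map (f^[j] ∘ f^[p]) ρ := by
          rw [← Function.iterate_add, ← Function.iterate_add, Nat.add_comm]
      _ = Measure.map (f^[j]) (Measure.map (f^[p]) ρ) := (Measure.map_map hfj hfp).symm
      _ = Measure.map (f^[j]) ρ := by rw [hmapρ]
  refine ⟨fun j _ => hinv j, ?_, ?_⟩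
  · have h1 : f ∘ f^[p - 1] = f^[p] := by
      funext x
      rw [Function.comp_apply, ← Function.iterate_succ_apply' f (p - 1) x,
        Nat.succ_eq_add_one, Nat.sub_add_cancel hp]
    rw [Measure.map_map hf (hf.iterate (p - 1)), h1, hmapρ]
  · intro j _
    have hfj : Measurable (f^[j]) := hf.iterate j
    refine ⟨⟨hfp, hinv j⟩, ⟨fun s hs hsinv => Filter.eventuallyConst_set'.2 ?_⟩⟩
    have hTinv : f^[p] ⁻¹' (f^[j] ⁻¹' s) = f^[j] ⁻¹' s := by
      rw [← Set.preimage_comp, ← Function.iterate_add, Nat.add_comm,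
        Function.iterate_add, Set.preimage_comp, hsinv]
    rcases hρ.ae_empty_or_univ (hfj hs) hTinv with h | h
    · left
      have h0 : ρ (f^[j] ⁻¹' s) = 0 := by
        rwa [← ae_eq_empty]
      rw [ae_eq_empty, Measure.map_apply hfj hs]
      exact h0
    · right
      have h0 : ρ ((f^[j] ⁻¹' s)ᶜ) = 0 := by
        rwa [← ae_eq_univ]
      rw [ae_eq_univ, Measure.map_apply hfj hs.compl, Set.preimage_compl]
      exact h0
end
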